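/- The GP-DDF⁺ predictive mean equals the PIC predictive mean: μ_s + Γ̃_{sD}(Γ_DD + Λ)⁻¹(z_D − μ_D) = μ_s + (γ_{sU}^k Σ̈_UU⁻¹ z̈_U − Σ_{sU} Σ_UU⁻¹ ż_U^k) + ż_s^k, where k = τ_s, Γ_DD ≜ Σ_DU Σ_UU⁻¹ Σ_UD, z̈_U ≜ Σ_k ż_U^k. -/

import Mathlib

open Matrix

section Aux
variable {K : Type*} [Fintype K] [DecidableEq K] {δ : K → Type*} [∀ k, Fintype (δ k)]
  {m n : Type*} [Fintype m] [Fintype n]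

omit [DecidableEq K] [Fintype m] in
private lemma sig_mul_sig (B : ∀ k, Matrix m (δ k) ℝ) (C : ∀ k, Matrix (δ k) n ℝ) :
    (Matrix.of fun i (d : Sigma δ) => B d.1 i d.2) *
      (Matrix.of fun (d : Sigma δ) j => C d.1 d.2 j) = ∑ k, B k * C k := by
  ext i j
  rw [Matrix.mul_apply, ← Finset.univ_sigma_univ, Finset.sum_sigma]
  simp [Matrix.mul_apply, Matrix.sum_apply]

omit [Fintype m] [Fintype n] in
private lemma row_mul_bd [∀ k, DecidableEq (δ k)] (B : ∀ k, Matrix m (δ k) ℝ)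
    (M : ∀ k, Matrix (δ k) (δ k) ℝ) :
    (Matrix.of fun i (d : Sigma δ) => B d.1 i d.2) * Matrix.blockDiagonal' M
      = Matrix.of fun i (d : Sigma δ) => (B d.1 * M d.1) i d.2 := by
  ext i ⟨k, x⟩
  rw [Matrix.mul_apply]
  rw [← Finset.univ_sigma_univ, Finset.sum_sigma]
  rw [Finset.sum_eq_single k]
  · simp [Matrix.mul_apply]
  · intro k' _ hk'
    simp [Matrix.blockDiagonal'_apply', hk']
  · simp

omit [Fintype m] [Fintype n] in
private lemma bd_mul_inv [∀ k, DecidableEq (δ k)] (L : ∀ k, Matrix (δ k) (δ k) ℝ)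
    (hL : ∀ k, IsUnit (L k).det) :
    Matrix.blockDiagonal' L * Matrix.blockDiagonal' (fun k => (L k)⁻¹) = 1 := by
  rw [← Matrix.blockDiagonal'_mul]
  rw [show (fun k => L k * (L k)⁻¹) = fun k => (1 : Matrix (δ k) (δ k) ℝ) from
    funext fun k => Matrix.mul_nonsing_inv _ (hL k)]
  exact Matrix.blockDiagonal'_one

omit [Fintype m] [Fintype n] in
private lemma bd_inv [∀ k, DecidableEq (δ k)] (L : ∀ k, Matrix (δ k) (δ k) ℝ)
    (hL : ∀ k, IsUnit (L k).det) :
    (Matrix.blockDiagonal' L)⁻¹ = Matrix.blockDiagonal' fun k => (L k)⁻¹ :=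
  Matrix.inv_eq_right_inv (bd_mul_inv L hL)

private lemma sum_ite_split {α M : Type*} [Fintype α] [DecidableEq α] [AddCommGroup M]
    (t : α) (f g : α → M) :
    ∑ k, (if k = t then f k else g k) = (∑ k, g k) + (f t - g t) := by
  have h : ∀ k, (if k = t then f k else g k)
      = g k + (if k = t then f k - g k else 0) := by
    intro k; split <;> simp
  simp [h, Finset.sum_add_distrib, Finset.sum_ite_eq']

end Aux

set_option maxHeartbeats 1000000 in
theorem stmt6 {K U : Type*} [Fintype K] [DecidableEq K] [Fintype U] [DecidableEq U]
    {δ : K → Type*} [∀ k, Fintype (δ k)] [∀ k, DecidableEq (δ k)]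
    (τs : K) (mus : Matrix Unit Unit ℝ)
    (SsU : Matrix Unit U ℝ) (SUU : Matrix U U ℝ) (hUU : SUU.PosDef)
    (SsD : ∀ k, Matrix Unit (δ k) ℝ) (SUD : ∀ k, Matrix U (δ k) ℝ)
    (L : ∀ k, Matrix (δ k) (δ k) ℝ) (hL : ∀ k, (L k).PosDef)
    (z μ : ∀ k, Matrix (δ k) Unit ℝ) :
    mus
      + (Matrix.of fun (_ : Unit) (d : Sigma δ) =>
            if d.1 = τs then SsD d.1 () d.2 else (SsU * SUU⁻¹ * SUD d.1) () d.2)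
        * ((Matrix.of fun (d : Sigma δ) (u : U) => SUD d.1 u d.2)
             * SUU⁻¹ * (Matrix.of fun (u : U) (d : Sigma δ) => SUD d.1 u d.2)
           + Matrix.blockDiagonal' L)⁻¹
        * (Matrix.of fun (d : Sigma δ) (_ : Unit) => (z d.1 - μ d.1) d.2 ())
    = mus
      + ((SsU + SsU * SUU⁻¹ * (SUD τs * (L τs)⁻¹ * (SUD τs)ᵀ)
            - SsD τs * (L τs)⁻¹ * (SUD τs)ᵀ)
          * (SUU + ∑ k, SUD k * (L k)⁻¹ * (SUD k)ᵀ)⁻¹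
          * (∑ k, SUD k * (L k)⁻¹ * (z k - μ k))
        - SsU * SUU⁻¹ * (SUD τs * (L τs)⁻¹ * (z τs - μ τs)))
      + SsD τs * (L τs)⁻¹ * (z τs - μ τs) := by
  classical
  have hdU : IsUnit SUU.det := hUU.det_pos.ne'.isUnit
  have hdL : ∀ k, IsUnit (L k).det := fun k => (hL k).det_pos.ne'.isUnit
  have hsumPSD : (∑ k, SUD k * (L k)⁻¹ * (SUD k)ᵀ).PosSemidef := by
    apply Finset.sum_induction _ _ (fun A B hA hB => hA.add hB) Matrix.PosSemidef.zero
    intro k _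
    have h := ((hL k).inv.posSemidef).mul_mul_conjTranspose_same (SUD k)
    rwa [Matrix.conjTranspose_eq_transpose_of_trivial] at h
  have hSddPD : (SUU + ∑ k, SUD k * (L k)⁻¹ * (SUD k)ᵀ).PosDef :=
    hUU.add_posSemidef hsumPSD
  have hdS : IsUnit (SUU + ∑ k, SUD k * (L k)⁻¹ * (SUD k)ᵀ).det :=
    hSddPD.det_pos.ne'.isUnit
  -- block product computations
  have hSrow : (Matrix.of fun (u : U) (d : Sigma δ) => SUD d.1 u d.2)
      * Matrix.blockDiagonal' (fun k => (L k)⁻¹)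
      = Matrix.of fun (u : U) (d : Sigma δ) => (SUD d.1 * (L d.1)⁻¹) u d.2 :=
    row_mul_bd SUD fun k => (L k)⁻¹
  have hmid : (Matrix.of fun (u : U) (d : Sigma δ) => (SUD d.1 * (L d.1)⁻¹) u d.2)
      * (Matrix.of fun (d : Sigma δ) (u : U) => SUD d.1 u d.2)
      = ∑ k, SUD k * (L k)⁻¹ * (SUD k)ᵀ :=
    sig_mul_sig (fun k => SUD k * (L k)⁻¹) fun k => (SUD k)ᵀ
  have hz : (Matrix.of fun (u : U) (d : Sigma δ) => (SUD d.1 * (L d.1)⁻¹) u d.2)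
      * (Matrix.of fun (d : Sigma δ) (j : Unit) => (z d.1 - μ d.1) d.2 j)
      = ∑ k, SUD k * (L k)⁻¹ * (z k - μ k) :=
    sig_mul_sig (fun k => SUD k * (L k)⁻¹) fun k => z k - μ k
  have hrowB : (Matrix.of fun (i : Unit) (d : Sigma δ) =>
        (if d.1 = τs then SsD d.1 else SsU * SUU⁻¹ * SUD d.1) i d.2)
      * Matrix.blockDiagonal' (fun k => (L k)⁻¹)
      = Matrix.of fun (i : Unit) (d : Sigma δ) =>
        ((if d.1 = τs then SsD d.1 else SsU * SUU⁻¹ * SUD d.1) * (L d.1)⁻¹) i d.2 :=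
    row_mul_bd (fun k => if k = τs then SsD k else SsU * SUU⁻¹ * SUD k) fun k => (L k)⁻¹
  have hBz : (Matrix.of fun (i : Unit) (d : Sigma δ) =>
        ((if d.1 = τs then SsD d.1 else SsU * SUU⁻¹ * SUD d.1) * (L d.1)⁻¹) i d.2)
      * (Matrix.of fun (d : Sigma δ) (j : Unit) => (z d.1 - μ d.1) d.2 j)
      = ∑ k, (if k = τs then SsD k else SsU * SUU⁻¹ * SUD k) * (L k)⁻¹ * (z k - μ k) :=
    sig_mul_sig (fun k => (if k = τs then SsD k else SsU * SUU⁻¹ * SUD k) * (L k)⁻¹)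
      fun k => z k - μ k
  have hBPt : (Matrix.of fun (i : Unit) (d : Sigma δ) =>
        ((if d.1 = τs then SsD d.1 else SsU * SUU⁻¹ * SUD d.1) * (L d.1)⁻¹) i d.2)
      * (Matrix.of fun (d : Sigma δ) (u : U) => SUD d.1 u d.2)
      = ∑ k, (if k = τs then SsD k else SsU * SUU⁻¹ * SUD k) * (L k)⁻¹ * (SUD k)ᵀ :=
    sig_mul_sig (fun k => (if k = τs then SsD k else SsU * SUU⁻¹ * SUD k) * (L k)⁻¹)
      fun k => (SUD k)ᵀ
  -- rewrite the ugly `of` matrices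
  have hGt : (Matrix.of fun (_ : Unit) (d : Sigma δ) =>
        if d.1 = τs then SsD d.1 () d.2 else (SsU * SUU⁻¹ * SUD d.1) () d.2)
      = Matrix.of fun (i : Unit) (d : Sigma δ) =>
        (if d.1 = τs then SsD d.1 else SsU * SUU⁻¹ * SUD d.1) i d.2 := by
    ext i d
    obtain ⟨⟩ := i
    exact (apply_ite (fun M : Matrix Unit (δ d.1) ℝ => M () d.2) _ _ _).symm
  have hrcol : (Matrix.of fun (d : Sigma δ) (_ : Unit) => (z d.1 - μ d.1) d.2 ())
      = Matrix.of fun (d : Sigma δ) (j : Unit) => (z d.1 - μ d.1) d.2 j := by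
    ext d j
    obtain ⟨⟩ := j
    rfl
  -- Woodbury
  have hG : ((Matrix.of fun (d : Sigma δ) (u : U) => SUD d.1 u d.2)
        * SUU⁻¹ * (Matrix.of fun (u : U) (d : Sigma δ) => SUD d.1 u d.2)
        + Matrix.blockDiagonal' L)⁻¹
      = Matrix.blockDiagonal' (fun k => (L k)⁻¹)
        - Matrix.blockDiagonal' (fun k => (L k)⁻¹)
          * (Matrix.of fun (d : Sigma δ) (u : U) => SUD d.1 u d.2)
          * (SUU + ∑ k, SUD k * (L k)⁻¹ * (SUD k)ᵀ)⁻¹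
          * (Matrix.of fun (u : U) (d : Sigma δ) => SUD d.1 u d.2)
          * Matrix.blockDiagonal' (fun k => (L k)⁻¹) := by
    have hΛu : IsUnit (Matrix.blockDiagonal' L) :=
      (Matrix.isUnit_iff_isUnit_det _).mpr (Matrix.isUnit_det_of_right_inverse (bd_mul_inv L hdL))
    have hCu : IsUnit SUU⁻¹ := hUU.inv.isUnit
    have hΛi : (Matrix.blockDiagonal' L)⁻¹ = Matrix.blockDiagonal' fun k => (L k)⁻¹ :=
      bd_inv L hdL
    have hACu : IsUnit (SUU⁻¹⁻¹
        + (Matrix.of fun (u : U) (d : Sigma δ) => SUD d.1 u d.2)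
          * (Matrix.blockDiagonal' L)⁻¹
          * (Matrix.of fun (d : Sigma δ) (u : U) => SUD d.1 u d.2)) := by
      rw [Matrix.nonsing_inv_nonsing_inv _ hdU, hΛi, hSrow, hmid]
      exact hSddPD.isUnit
    rw [add_comm _ (Matrix.blockDiagonal' L),
      Matrix.add_mul_mul_inv_eq_sub _ _ _ _ hΛu hCu hACu, hΛi,
      Matrix.nonsing_inv_nonsing_inv _ hdU, hSrow, hmid]
  rw [hGt, hrcol, hG]
  -- expand the product
  have hbig : (Matrix.of fun (i : Unit) (d : Sigma δ) =>
        (if d.1 = τs then SsD d.1 else SsU * SUU⁻¹ * SUD d.1) i d.2)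
      * (Matrix.blockDiagonal' (fun k => (L k)⁻¹)
        - Matrix.blockDiagonal' (fun k => (L k)⁻¹)
          * (Matrix.of fun (d : Sigma δ) (u : U) => SUD d.1 u d.2)
          * (SUU + ∑ k, SUD k * (L k)⁻¹ * (SUD k)ᵀ)⁻¹
          * (Matrix.of fun (u : U) (d : Sigma δ) => SUD d.1 u d.2)
          * Matrix.blockDiagonal' (fun k => (L k)⁻¹))
      * (Matrix.of fun (d : Sigma δ) (j : Unit) => (z d.1 - μ d.1) d.2 j)
      = (∑ k, (if k = τs then SsD k else SsU * SUU⁻¹ * SUD k) * (L k)⁻¹ * (z k - μ k))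
        - (∑ k, (if k = τs then SsD k else SsU * SUU⁻¹ * SUD k) * (L k)⁻¹ * (SUD k)ᵀ)
          * ((SUU + ∑ k, SUD k * (L k)⁻¹ * (SUD k)ᵀ)⁻¹
             * (∑ k, SUD k * (L k)⁻¹ * (z k - μ k))) := by
    rw [Matrix.mul_sub, Matrix.sub_mul]
    congr 1
    · rw [hrowB]; exact hBz
    · calc _ = ((Matrix.of fun (i : Unit) (d : Sigma δ) =>
              (if d.1 = τs then SsD d.1 else SsU * SUU⁻¹ * SUD d.1) i d.2)
            * Matrix.blockDiagonal' (fun k => (L k)⁻¹)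
            * (Matrix.of fun (d : Sigma δ) (u : U) => SUD d.1 u d.2))
          * ((SUU + ∑ k, SUD k * (L k)⁻¹ * (SUD k)ᵀ)⁻¹
            * ((Matrix.of fun (u : U) (d : Sigma δ) => SUD d.1 u d.2)
                * Matrix.blockDiagonal' (fun k => (L k)⁻¹)
                * (Matrix.of fun (d : Sigma δ) (j : Unit) => (z d.1 - μ d.1) d.2 j))) := by
            simp only [Matrix.mul_assoc]
        _ = _ := by rw [hrowB, hBPt, hSrow, hz]
  rw [hbig]
  -- split the ite sums
  have hT1 : (∑ k, (if k = τs then SsD k else SsU * SUU⁻¹ * SUD k) * (L k)⁻¹ * (z k - μ k))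
      = SsU * SUU⁻¹ * (∑ k, SUD k * (L k)⁻¹ * (z k - μ k))
        + (SsD τs * (L τs)⁻¹ * (z τs - μ τs)
           - SsU * SUU⁻¹ * (SUD τs * (L τs)⁻¹ * (z τs - μ τs))) := by
    rw [Finset.sum_congr rfl (fun k _ => show _ = if k = τs
        then SsD k * (L k)⁻¹ * (z k - μ k)
        else SsU * SUU⁻¹ * SUD k * (L k)⁻¹ * (z k - μ k) by split <;> rfl)]
    rw [sum_ite_split]
    congr 1
    · rw [Matrix.mul_sum]
      exact Finset.sum_congr rfl fun k _ => by simp only [Matrix.mul_assoc]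
    · congr 1
      simp only [Matrix.mul_assoc]
  have hT2 : (∑ k, (if k = τs then SsD k else SsU * SUU⁻¹ * SUD k) * (L k)⁻¹ * (SUD k)ᵀ)
      = SsU * SUU⁻¹ * (∑ k, SUD k * (L k)⁻¹ * (SUD k)ᵀ)
        + (SsD τs * (L τs)⁻¹ * (SUD τs)ᵀ
           - SsU * SUU⁻¹ * (SUD τs * (L τs)⁻¹ * (SUD τs)ᵀ)) := by
    rw [Finset.sum_congr rfl (fun k _ => show _ = if k = τs
        then SsD k * (L k)⁻¹ * (SUD k)ᵀ
        else SsU * SUU⁻¹ * SUD k * (L k)⁻¹ * (SUD k)ᵀ by split <;> rfl)]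
    rw [sum_ite_split]
    congr 1
    · rw [Matrix.mul_sum]
      exact Finset.sum_congr rfl fun k _ => by simp only [Matrix.mul_assoc]
    · congr 1
      simp only [Matrix.mul_assoc]
  rw [hT1, hT2]
  -- final algebra
  have hXrel : (∑ k, SUD k * (L k)⁻¹ * (SUD k)ᵀ)
      * ((SUU + ∑ k, SUD k * (L k)⁻¹ * (SUD k)ᵀ)⁻¹ * (∑ k, SUD k * (L k)⁻¹ * (z k - μ k)))
      = (∑ k, SUD k * (L k)⁻¹ * (z k - μ k))
        - SUU * ((SUU + ∑ k, SUD k * (L k)⁻¹ * (SUD k)ᵀ)⁻¹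
            * (∑ k, SUD k * (L k)⁻¹ * (z k - μ k))) := by
    have h2 : (SUU + ∑ k, SUD k * (L k)⁻¹ * (SUD k)ᵀ)
        * ((SUU + ∑ k, SUD k * (L k)⁻¹ * (SUD k)ᵀ)⁻¹
            * (∑ k, SUD k * (L k)⁻¹ * (z k - μ k)))
        = ∑ k, SUD k * (L k)⁻¹ * (z k - μ k) := by
      rw [← Matrix.mul_assoc, Matrix.mul_nonsing_inv _ hdS, Matrix.one_mul]
    rw [Matrix.add_mul] at h2
    exact eq_sub_of_add_eq' h2
  have hc2 : SUU⁻¹ * (SUU * ((SUU + ∑ k, SUD k * (L k)⁻¹ * (SUD k)ᵀ)⁻¹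
        * (∑ k, SUD k * (L k)⁻¹ * (z k - μ k))))
      = (SUU + ∑ k, SUD k * (L k)⁻¹ * (SUD k)ᵀ)⁻¹
        * (∑ k, SUD k * (L k)⁻¹ * (z k - μ k)) := by
    rw [← Matrix.mul_assoc, Matrix.nonsing_inv_mul _ hdU, Matrix.one_mul]
  simp only [Matrix.add_mul, Matrix.sub_mul, Matrix.mul_assoc] at hXrel hc2 ⊢
  rw [hXrel]
  simp only [Matrix.mul_sub] at hc2 ⊢
  rw [hc2]
  abel
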